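/- arXiv:2010.12122 — 10 statements merged into one kernel-verified Lean document; each statement's English description precedes it below -/
import Mathlib

section
/- Let S be a string, q ≥ 1, and let a ≤ c ≤ b ≤ d be positions within S such that the substrings S[a..b] and S[c..d] are both q-periodic and the overlap satisfies b − c + 1 ≥ q. Then the substring S[a..d] is q-periodic. -/
/-- If `S[a..b]` and `S[c..d]` are both `q`-periodic, with `a ≤ c ≤ b ≤ d` and
overlap `b - c + 1 ≥ q`, then `S[a..d]` is `q`-periodic. Strings are 1-indexed
functions `ℕ → α` with length `n`. -/
theorem periodic_glue {α : Type*} (S : ℕ → α) (n q a b c d : ℕ)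
    (hq : 1 ≤ q) (ha : 1 ≤ a) (hac : a ≤ c) (hcb : c ≤ b) (hbd : b ≤ d)
    (hdn : d ≤ n)
    (hper1 : ∀ t, a ≤ t → t + q ≤ b → S t = S (t + q))
    (hper2 : ∀ t, c ≤ t → t + q ≤ d → S t = S (t + q))
    (hoverlap : q ≤ b - c + 1) :
    ∀ t, a ≤ t → t + q ≤ d → S t = S (t + q) := by
  intro t hat htd
  by_cases h : t + q ≤ b
  · exact hper1 t hat h
  · exact hper2 t (by omega) htd
end

section
/- Let P be a string of length m and S a string of length L with m ≤ L ≤ 2m, such that the prefix S[1..m] equals the reverse of P. Suppose P occurs as a substring of S at positions o < o' in S with o' − o < m, then S[1..o'+m−1] is (o'−o)-periodic. (An occurrence of P at position p means S[p..p+m−1] = P.) -/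
/-- Let `P` have length `m` and `S` have length `L` with `m ≤ L ≤ 2m`, such that
the prefix `S[1..m]` equals the reverse of `P`. If `P` occurs in `S` at positions
`o < o'` with `o' - o < m`, then `S[1..o'+m-1]` is `(o'-o)`-periodic.
Strings are 1-indexed functions; an occurrence of `P` at position `p` means
`S (p + t) = P (t + 1)` for all `t < m`. -/
theorem overlapping_reverse_prefix_periodic {α : Type*} (S P : ℕ → α) (L m o o' : ℕ)
    (hm : 1 ≤ m) (hmL : m ≤ L) (hL2m : L ≤ 2 * m)
    (hprefix : ∀ t, 1 ≤ t → t ≤ m → S t = P (m + 1 - t))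
    (ho : 1 ≤ o) (hoo' : o < o') (ho'm : o' - o < m) (ho'L : o' + m - 1 ≤ L)
    (hocc : ∀ t, t < m → S (o + t) = P (t + 1))
    (hocc' : ∀ t, t < m → S (o' + t) = P (t + 1)) :
    ∀ t, 1 ≤ t → t + (o' - o) ≤ o' + m - 1 → S t = S (t + (o' - o)) := by
  intro t ht hle
  set q := o' - o with hq
  have hq1 : 1 ≤ q := by omega
  have ho'm1 : o' ≤ m + 1 := by omega
  have hP : ∀ c, 1 ≤ c → c + q ≤ m → P c = P (c + q) := by
    intro c hc hcq
    have h1 : S (o + (c - 1 + q)) = P (c - 1 + q + 1) := hocc _ (by omega)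
    have h2 : S (o' + (c - 1)) = P (c - 1 + 1) := hocc' _ (by omega)
    have he : o + (c - 1 + q) = o' + (c - 1) := by omega
    rw [he] at h1
    have h3 : P (c - 1 + 1) = P (c - 1 + q + 1) := by rw [← h2, h1]
    have e1 : c - 1 + 1 = c := by omega
    have e2 : c - 1 + q + 1 = c + q := by omega
    rwa [e1, e2] at h3
  by_cases hto : o ≤ t
  · have h1 : S (o + (t - o)) = P (t - o + 1) := hocc _ (by omega)
    have h2 : S (o' + (t - o)) = P (t - o + 1) := hocc' _ (by omega)
    have e1 : o + (t - o) = t := by omega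
    have e2 : o' + (t - o) = t + q := by omega
    rw [e1] at h1; rw [e2] at h2
    rw [h1, h2]
  · have h1 : S t = P (m + 1 - t) := hprefix t ht (by omega)
    have h2 : S (t + q) = P (m + 1 - (t + q)) := hprefix _ (by omega) (by omega)
    have h3 : P (m + 1 - (t + q)) = P (m + 1 - (t + q) + q) := hP _ (by omega) (by omega)
    have e : m + 1 - (t + q) + q = m + 1 - t := by omega
    rw [h1, h2, h3, e]
end

section
/- Let P be a string of length m and S a string of length L with m ≤ L ≤ 2m, such that the prefix S[1..m] equals the reverse of P. Let O = {p : 1 ≤ p ≤ L−m+1 and S[p..p+m−1] = P} be the set of occurrence positions of P in S, and suppose |O| ≥ 2. Let o_r = max O be the rightmost occurrence and o = max(O \ {o_r}) the second rightmost occurrence, and suppose o_r − o < m (the two rightmost occurrences overlap). Then O = { o_r − i·(o_r − o) : i a nonnegative integer with o_r − i·(o_r − o) ≥ 1 }. -/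
/-- Let `P` have length `m` and `S` have length `L` with `m ≤ L ≤ 2m`, such that
the prefix `S[1..m]` equals the reverse of `P`. Let `O` be the set of occurrence
positions of `P` in `S`, with at least two elements, rightmost occurrence `o_r`
and second rightmost `o`, overlapping (`o_r - o < m`). Then `O` is exactly the
arithmetic progression `{o_r - i•(o_r - o) : i ≥ 0, o_r - i•(o_r - o) ≥ 1}`. -/
theorem occurrences_arith_progression {α : Type*} (S P : ℕ → α) (L m : ℕ) (O : Set ℕ)
    (hm : 1 ≤ m) (hmL : m ≤ L) (hL2m : L ≤ 2 * m)
    (hprefix : ∀ t, 1 ≤ t → t ≤ m → S t = P (m + 1 - t))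
    (hO : O = {p : ℕ | 1 ≤ p ∧ p ≤ L - m + 1 ∧ ∀ t < m, S (p + t) = P (t + 1)})
    (o_r o : ℕ) (hor : o_r ∈ O) (ho : o ∈ O) (holt : o < o_r)
    (hmax : ∀ p ∈ O, p ≤ o_r) (hsec : ∀ p ∈ O, p ≠ o_r → p ≤ o)
    (hoverlap : o_r - o < m) :
    O = {p : ℕ | ∃ i : ℕ, i * (o_r - o) ≤ o_r - 1 ∧ p = o_r - i * (o_r - o)} := by
  subst hO
  simp only [Set.mem_setOf_eq] at hor ho hmax hsec
  obtain ⟨hor1, hor2, hor3⟩ := hor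
  obtain ⟨ho1, ho2, ho3⟩ := ho
  have horm : o_r ≤ m + 1 := by omega
  have hdpos : 0 < o_r - o := by omega
  -- period d = o_r - o on [1, m]
  have perD : ∀ j, 1 ≤ j → j + (o_r - o) ≤ m → P (j + (o_r - o)) = P j := by
    intro j h1 h2
    have t1 : S (o + (j + (o_r - o) - 1)) = P (j + (o_r - o) - 1 + 1) := ho3 _ (by omega)
    have t2 : S (o_r + (j - 1)) = P (j - 1 + 1) := hor3 _ (by omega)
    have e0 : o + (j + (o_r - o) - 1) = o_r + (j - 1) := by omega
    have e1 : j + (o_r - o) - 1 + 1 = j + (o_r - o) := by omega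
    have e2 : j - 1 + 1 = j := by omega
    rw [e1, e0] at t1
    rw [e2] at t2
    rw [t2] at t1
    exact t1.symm
  -- congruence version of period d
  have fDaux : ∀ y, ∀ x, 1 ≤ x → y ≤ m → x ≤ y → x ≡ y [MOD o_r - o] → P x = P y := by
    intro y
    induction y using Nat.strong_induction_on with
    | _ y ih =>
      intro x hx1 hym hxy hmod
      rcases eq_or_lt_of_le hxy with rfl | hlt
      · rfl
      · have hdvd : (o_r - o) ∣ y - x := (Nat.modEq_iff_dvd' hxy).mp hmod
        have hge : o_r - o ≤ y - x := Nat.le_of_dvd (by omega) hdvd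
        have h1 : (o_r - o) ∣ (y - (o_r - o)) - x := by
          have h1' : (y - (o_r - o)) - x = (y - x) - (o_r - o) := by omega
          rw [h1']
          exact Nat.dvd_sub hdvd dvd_rfl
        have hmod2 : x ≡ y - (o_r - o) [MOD o_r - o] :=
          (Nat.modEq_iff_dvd' (by omega)).mpr h1
        have hrec := ih (y - (o_r - o)) (by omega) x hx1 (by omega) (by omega) hmod2
        have h2 := perD (y - (o_r - o)) (by omega) (by omega)
        have h3 : y - (o_r - o) + (o_r - o) = y := by omega
        rw [h3] at h2
        exact hrec.trans h2.symm
  have fD : ∀ x y, 1 ≤ x → x ≤ m → 1 ≤ y → y ≤ m → x ≡ y [MOD o_r - o] → P x = P y := by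
    intro x y hx1 hxm hy1 hym h
    rcases le_total x y with hle | hle
    · exact fDaux y x hx1 hym hle h
    · exact (fDaux x y hy1 hxm hle h.symm).symm
  -- palindromic prefixes from occurrences
  have pal : ∀ q, (1 ≤ q ∧ q ≤ L - m + 1 ∧ ∀ t < m, S (q + t) = P (t + 1)) →
      ∀ j, 1 ≤ j → j + q ≤ m + 1 → P j = P ((m + 1 - q) + 1 - j) := by
    intro q hq j hj1 hj2
    obtain ⟨hq1, hq2, hq3⟩ := hq
    have h1 : S (q + (j - 1)) = P (j - 1 + 1) := hq3 _ (by omega)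
    have h2 : S (q + (j - 1)) = P (m + 1 - (q + (j - 1))) := hprefix _ (by omega) (by omega)
    have e1 : j - 1 + 1 = j := by omega
    have e2 : m + 1 - (q + (j - 1)) = (m + 1 - q) + 1 - j := by omega
    rw [e1] at h1
    rw [e2] at h2
    exact h1.symm.trans h2
  have palo : ∀ j, 1 ≤ j → j ≤ m + 1 - o → P j = P ((m + 1 - o) + 1 - j) :=
    fun j h1 h2 => pal o ⟨ho1, ho2, ho3⟩ j h1 (by omega)
  -- mirror lemma
  have mirror : ∀ β, o_r - o ≤ β → β ≤ m →
      (∀ j, 1 ≤ j → j ≤ β → P j = P (β + 1 - j)) →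
      ∀ x, ∀ y, 1 ≤ x → x ≤ m → 1 ≤ y → y ≤ m → x + y ≡ β + 1 [MOD o_r - o] → P x = P y := by
    intro β hβd hβm hpal x
    induction x using Nat.strong_induction_on with
    | _ x ih =>
      intro y hx1 hxm hy1 hym hsum
      rcases le_or_gt x (o_r - o) with hxd | hxd
      · have h1 := hpal x hx1 (le_trans hxd hβd)
        have hc : (β + 1 - x) + x = β + 1 := by omega
        have h2' : y + x ≡ (β + 1 - x) + x [MOD o_r - o] := by
          rw [hc, Nat.add_comm y x]
          exact hsum
        have h2 : β + 1 - x ≡ y [MOD o_r - o] := (Nat.ModEq.add_right_cancel' x h2').symm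
        have h3 := fD (β + 1 - x) y (by omega) (by omega) hy1 hym h2
        exact h1.trans h3
      · have h4 := perD (x - (o_r - o)) (by omega) (by omega)
        have h5 : x - (o_r - o) + (o_r - o) = x := by omega
        rw [h5] at h4
        have h6 : (x - (o_r - o)) + y ≡ β + 1 [MOD o_r - o] := by
          have h7 : ((x - (o_r - o)) + y) + (o_r - o) = x + y := by omega
          have h8 : ((x - (o_r - o)) + y) ≡ ((x - (o_r - o)) + y) + (o_r - o) [MOD o_r - o] := by
            refine (Nat.modEq_iff_dvd' (by omega)).mpr ?_
            have h9 : (((x - (o_r - o)) + y) + (o_r - o)) - ((x - (o_r - o)) + y) = o_r - o := by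
              omega
            rw [h9]
          exact h8.trans (h7 ▸ hsum)
        exact h4.trans (ih (x - (o_r - o)) (by omega) y (by omega) (by omega) hy1 hym h6)
  -- representatives
  have hrep : ∀ N : ℕ, ∃ w, 1 ≤ w ∧ w ≤ o_r - o ∧ w ≡ N [MOD o_r - o] := by
    intro N
    by_cases h : N % (o_r - o) = 0
    · exact ⟨o_r - o, by omega, le_refl _, by
        show (o_r - o) % (o_r - o) = N % (o_r - o)
        rw [Nat.mod_self, h]⟩
    · refine ⟨N % (o_r - o), Nat.pos_of_ne_zero h, le_of_lt (Nat.mod_lt _ (by omega)), ?_⟩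
      show N % (o_r - o) % (o_r - o) = N % (o_r - o)
      exact Nat.mod_mod_of_dvd N dvd_rfl
  -- main set equality
  ext p
  simp only [Set.mem_setOf_eq]
  constructor
  · rintro ⟨hp1, hp2, hp3⟩
    rcases eq_or_ne p o_r with rfl | hne
    · exact ⟨0, by omega, by omega⟩
    · have hpo : p ≤ o := hsec p ⟨hp1, hp2, hp3⟩ hne
      have palp : ∀ j, 1 ≤ j → j ≤ m + 1 - p → P j = P ((m + 1 - p) + 1 - j) :=
        fun j h1 h2 => pal p ⟨hp1, hp2, hp3⟩ j h1 (by omega)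
      by_cases hdvd : (o_r - o) ∣ (o_r - p)
      · refine ⟨(o_r - p) / (o_r - o), ?_, ?_⟩
        · rw [Nat.div_mul_cancel hdvd]; omega
        · rw [Nat.div_mul_cancel hdvd]; omega
      · exfalso
        obtain ⟨r, hrdef⟩ : ∃ r, (o_r - p) % (o_r - o) = r := ⟨_, rfl⟩
        have hrd : r < o_r - o := by
          have := Nat.mod_lt (o_r - p) (show 0 < o_r - o by omega)
          omega
        have hre : r ≡ o_r - p [MOD o_r - o] := hrdef ▸ Nat.mod_modEq _ _
        have hr0 : r ≠ 0 := fun h => hdvd (Nat.dvd_of_mod_eq_zero (by rw [hrdef]; exact h))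
        -- period r at residue level
        have perR : ∀ x y, 1 ≤ x → x ≤ m → 1 ≤ y → y ≤ m →
            x ≡ y + r [MOD o_r - o] → P x = P y := by
          intro x y hx1 hxm hy1 hym hxy
          obtain ⟨B, hB⟩ : ∃ B, B = (o_r - o - 1) * x := ⟨_, rfl⟩
          obtain ⟨C, hC⟩ : ∃ C, C = (o_r - o) * x := ⟨_, rfl⟩
          have hBC : C = B + x := by
            rw [hB, hC]
            have h2 : o_r - o = (o_r - o - 1) + 1 := by omega
            calc (o_r - o) * x = ((o_r - o - 1) + 1) * x := by rw [← h2]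
              _ = (o_r - o - 1) * x + 1 * x := by rw [Nat.add_mul]
              _ = (o_r - o - 1) * x + x := by rw [Nat.one_mul]
          obtain ⟨w, hw1, hwd, hwmod⟩ := hrep ((m + 1 - p) + 1 + B)
          have hxw : x + w ≡ (m + 1 - p) + 1 [MOD o_r - o] := by
            have s1 : x + w ≡ x + ((m + 1 - p) + 1 + B) [MOD o_r - o] :=
              Nat.ModEq.add_left x hwmod
            have s2 : x + ((m + 1 - p) + 1 + B) = ((m + 1 - p) + 1) + C := by omega
            rw [s2] at s1
            have s3 : C ≡ 0 [MOD o_r - o] := (Nat.modEq_zero_iff_dvd).mpr ⟨x, hC⟩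
            have s4 : ((m + 1 - p) + 1) + C ≡ ((m + 1 - p) + 1) + 0 [MOD o_r - o] :=
              Nat.ModEq.add_left _ s3
            rw [Nat.add_zero] at s4
            exact s1.trans s4
          have hPxw : P x = P w :=
            mirror (m + 1 - p) (by omega) (by omega) palp x w hx1 hxm hw1 (by omega) hxw
          have h2 : w + y ≡ (m + 1 - o) + 1 [MOD o_r - o] := by
            have s1 : x + w ≡ (y + r) + w [MOD o_r - o] := Nat.ModEq.add_right w hxy
            have s2 : (y + r) + w ≡ (m + 1 - p) + 1 [MOD o_r - o] := s1.symm.trans hxw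
            have s3 : (m + 1 - p) + 1 = ((m + 1 - o_r) + 1) + (o_r - p) := by omega
            rw [s3] at s2
            have s4 : ((m + 1 - o_r) + 1) + (o_r - p) ≡ ((m + 1 - o_r) + 1) + r
                [MOD o_r - o] := Nat.ModEq.add_left _ hre.symm
            have s5 : (y + r) + w = (y + w) + r := by omega
            rw [s5] at s2
            have s6 : (y + w) + r ≡ (((m + 1 - o_r) + 1)) + r [MOD o_r - o] := s2.trans s4
            have s7 : y + w ≡ (m + 1 - o_r) + 1 [MOD o_r - o] :=
              Nat.ModEq.add_right_cancel' r s6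
            have s8 : (m + 1 - o_r) + 1 ≡ ((m + 1 - o_r) + 1) + (o_r - o) [MOD o_r - o] := by
              refine (Nat.modEq_iff_dvd' (by omega)).mpr ?_
              have : (((m + 1 - o_r) + 1) + (o_r - o)) - ((m + 1 - o_r) + 1) = o_r - o := by omega
              rw [this]
            have s9 : ((m + 1 - o_r) + 1) + (o_r - o) = (m + 1 - o) + 1 := by omega
            rw [s9] at s8
            rw [Nat.add_comm w y]
            exact s7.trans s8
          have hPwy : P w = P y :=
            mirror (m + 1 - o) (by omega) (by omega) palo w y hw1 (by omega) hy1 hym h2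
          exact hPxw.trans hPwy
        -- o_r - r is an occurrence
        have hmem : 1 ≤ o_r - r ∧ o_r - r ≤ L - m + 1 ∧
            ∀ t < m, S ((o_r - r) + t) = P (t + 1) := by
          refine ⟨by omega, by omega, fun t ht => ?_⟩
          rcases lt_or_ge t r with htr | htr
          · have hx1 : 1 ≤ o_r - r + t := by omega
            have hxm : o_r - r + t ≤ m := by omega
            rw [hprefix _ hx1 hxm]
            refine mirror (m + 1 - p) (by omega) (by omega) palp _ _ (by omega) (by omega)
              (by omega) (by omega) ?_
            have hA : (m + 1 - (o_r - r + t)) + (t + 1) = ((m + 1 - o_r) + 1) + r := by omega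
            have hB : (m + 1 - p) + 1 = ((m + 1 - o_r) + 1) + (o_r - p) := by omega
            rw [hA, hB]
            exact Nat.ModEq.add_left _ hre
          · have hx : o_r - r + t = o_r + (t - r) := by omega
            rw [hx, hor3 (t - r) (by omega)]
            refine (perR (t + 1) (t - r + 1) (by omega) (by omega) (by omega) (by omega) ?_).symm
            have h : t - r + 1 + r = t + 1 := by omega
            rw [h]
        have hle := hsec (o_r - r) hmem (by omega)
        omega
  · rintro ⟨i, hile, rfl⟩
    obtain ⟨E, hE⟩ : ∃ E, E = i * (o_r - o) := ⟨_, rfl⟩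
    have hdE : (o_r - o) ∣ E := ⟨i, by rw [hE, Nat.mul_comm]⟩
    have hile' : E ≤ o_r - 1 := by rw [hE]; exact hile
    rw [← hE]
    refine ⟨by omega, by omega, fun t ht => ?_⟩
    rcases lt_or_ge t E with htE | htE
    · have hx1 : 1 ≤ o_r - E + t := by omega
      have hxm : o_r - E + t ≤ m := by omega
      rw [hprefix _ hx1 hxm]
      refine mirror (m + 1 - o) (by omega) (by omega) palo _ _ (by omega) (by omega)
        (by omega) (by omega) ?_
      have hA : (m + 1 - (o_r - E + t)) + (t + 1) = ((m + 1 - o_r) + 1) + E := by omega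
      have hB : (m + 1 - o) + 1 = ((m + 1 - o_r) + 1) + (o_r - o) := by omega
      rw [hA, hB]
      refine Nat.ModEq.add_left _ ?_
      exact ((Nat.modEq_zero_iff_dvd).mpr hdE).trans ((Nat.modEq_zero_iff_dvd).mpr dvd_rfl).symm
    · have hx : o_r - E + t = o_r + (t - E) := by omega
      rw [hx, hor3 (t - E) (by omega)]
      refine (fD (t + 1) (t - E + 1) (by omega) (by omega) (by omega) (by omega) ?_).symm
      refine ((Nat.modEq_iff_dvd' (by omega)).mpr ?_).symm
      have h : (t + 1) - (t - E + 1) = E := by omega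
      rw [h]
      exact hdE
end

section
/- Let S be a string whose substring S[x..y] is q-periodic (q ≥ 1). Let x ≤ u ≤ v ≤ y be such that S[u..v] is a palindrome and such that u+q ≥ x and v+q ≤ y. Then S[u+q..v+q] is also a palindrome. -/
/-- In a `q`-periodic region `S[x..y]`, shifting a palindrome `S[u..v]` by `q`
(staying inside the region) yields another palindrome `S[u+q..v+q]`. -/
theorem palindrome_shift_in_periodic {α : Type*} (S : ℕ → α) (n x y q u v : ℕ)
    (hq : 1 ≤ q) (hx : 1 ≤ x) (hyn : y ≤ n)
    (hper : ∀ t, x ≤ t → t + q ≤ y → S t = S (t + q))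
    (hxu : x ≤ u) (huv : u ≤ v) (hvy : v ≤ y)
    (hpal : ∀ t, 1 ≤ t → t ≤ v - u + 1 → S (u + t - 1) = S (v + 1 - t))
    (huqx : x ≤ u + q) (hvqy : v + q ≤ y) :
    ∀ t, 1 ≤ t → t ≤ v - u + 1 → S (u + q + t - 1) = S (v + q + 1 - t) := by
  intro t ht1 ht2
  have h1 : S (u + t - 1) = S (u + t - 1 + q) := hper _ (by omega) (by omega)
  have h2 : S (v + 1 - t) = S (v + 1 - t + q) := hper _ (by omega) (by omega)
  have e1 : u + q + t - 1 = u + t - 1 + q := by omega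
  have e2 : v + q + 1 - t = v + 1 - t + q := by omega
  rw [e1, e2, ← h1, ← h2]
  exact hpal t ht1 ht2
end

section
/- Let S be a string whose substring S[x..y] is q-periodic (q ≥ 1). Let x ≤ u ≤ v ≤ y be such that S[u..v] is a palindrome and v − u + 1 ≥ q. Then for all positions a, b with x ≤ a ≤ y, x ≤ b ≤ y and a + b = u + v, one has S[a] = S[b]. In particular, for any interval [u', v'] ⊆ [x, y] with u' + v' = u + v, the substring S[u'..v'] is a palindrome. -/
/-- In a `q`-periodic region `S[x..y]`, a palindrome `S[u..v]` of length at least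
`q` forces `S a = S b` whenever `a, b ∈ [x, y]` and `a + b = u + v`; in
particular every interval `[u', v'] ⊆ [x, y]` with the same center `u' + v' = u + v`
is a palindrome. -/
theorem palindrome_extends_in_periodic {α : Type*} (S : ℕ → α) (n x y q u v : ℕ)
    (hq : 1 ≤ q) (hx : 1 ≤ x) (hyn : y ≤ n)
    (hper : ∀ t, x ≤ t → t + q ≤ y → S t = S (t + q))
    (hxu : x ≤ u) (huv : u ≤ v) (hvy : v ≤ y)
    (hpal : ∀ t, 1 ≤ t → t ≤ v - u + 1 → S (u + t - 1) = S (v + 1 - t))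
    (hlen : q ≤ v - u + 1) :
    (∀ a b, x ≤ a → a ≤ y → x ≤ b → b ≤ y → a + b = u + v → S a = S b) ∧
      (∀ u' v', x ≤ u' → u' ≤ v' → v' ≤ y → u' + v' = u + v →
        ∀ t, 1 ≤ t → t ≤ v' - u' + 1 → S (u' + t - 1) = S (v' + 1 - t)) := by
  -- palindrome rephrased
  have L2 : ∀ a, u ≤ a → a ≤ v → S a = S (u + v - a) := by
    intro a h1 h2
    have h := hpal (a - u + 1) (by omega) (by omega)
    rw [show u + (a - u + 1) - 1 = a by omega,
        show v + 1 - (a - u + 1) = u + v - a by omega] at h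
    exact h
  have Q : ∀ m a, u - a ≤ m → x ≤ a → a ≤ v → u + v - a ≤ y → S a = S (u + v - a) := by
    intro m
    induction m with
    | zero => intro a hm h1 h2 h3; exact L2 a (by omega) h2
    | succ m ih =>
      intro a hm h1 h2 h3
      by_cases hua : u ≤ a
      · exact L2 a hua h2
      · have haq : a + q ≤ v := by omega
        have e1 : S a = S (a + q) := hper a h1 (by omega)
        have e2 : S (a + q) = S (u + v - (a + q)) :=
          ih (a + q) (by omega) (by omega) haq (by omega)
        have e3 : S (u + v - a - q) = S (u + v - a - q + q) :=
          hper (u + v - a - q) (by omega) (by omega)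
        rw [show u + v - a - q + q = u + v - a by omega] at e3
        rw [show u + v - (a + q) = u + v - a - q by omega] at e2
        rw [e1, e2, e3]
  have main : ∀ a b, x ≤ a → a ≤ y → x ≤ b → b ≤ y → a + b = u + v → S a = S b := by
    have half : ∀ a b, a ≤ b → x ≤ a → a ≤ y → x ≤ b → b ≤ y → a + b = u + v → S a = S b := by
      intro a b hab h1 h2 h3 h4 h5
      have : b = u + v - a := by omega
      rw [this]
      exact Q (u - a) a le_rfl h1 (by omega) (by omega)
    intro a b h1 h2 h3 h4 h5
    rcases le_total a b with h | h
    · exact half a b h h1 h2 h3 h4 h5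
    · exact (half b a h h3 h4 h1 h2 (by omega)).symm
  refine ⟨main, ?_⟩
  intro u' v' h1 h2 h3 h4 t ht1 ht2
  exact main (u' + t - 1) (v' + 1 - t) (by omega) (by omega) (by omega) (by omega) (by omega)
end

section
/- Let S be a string whose substring S[x..y] is α-periodic (α ≥ 1). Suppose there exist positions x ≤ u ≤ v ≤ y such that S[u..v] is a palindrome and v − u + 1 ≥ α. Then there exist positions x ≤ u' ≤ v' ≤ y such that S[u'..v'] is a palindrome and v' − u' + 1 ≥ (y − x + 1) − α. -/
private lemma eq_of_modEq_le {A : Type*} (S : ℕ → A) (x y a : ℕ)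
    (hper : ∀ t, x ≤ t → t + a ≤ y → S t = S (t + a)) :
    ∀ p q, x ≤ p → q ≤ y → p ≤ q → p ≡ q [MOD a] → S p = S q := by
  have aux : ∀ k p, x ≤ p → p + a * k ≤ y → S p = S (p + a * k) := by
    intro k
    induction k with
    | zero => simp
    | succ k ih =>
      intro p hp hle
      have hs : a * (k + 1) = a * k + a := Nat.mul_succ a k
      have h1 : p + a ≤ y := by omega
      calc S p = S (p + a) := hper p hp h1
        _ = S (p + a + a * k) := ih (p + a) (by omega) (by omega)
        _ = S (p + a * (k + 1)) := by rw [show p + a + a * k = p + a * (k + 1) by omega]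
  intro p q hxp hqy hpq hmod
  obtain ⟨k, hk⟩ := (Nat.modEq_iff_dvd' hpq).mp hmod
  have : q = p + a * k := by omega
  rw [this]
  exact aux k p hxp (by omega)

private lemma eq_of_modEq' {A : Type*} (S : ℕ → A) (x y a : ℕ)
    (hper : ∀ t, x ≤ t → t + a ≤ y → S t = S (t + a)) :
    ∀ p q, x ≤ p → p ≤ y → x ≤ q → q ≤ y → p ≡ q [MOD a] → S p = S q := by
  intro p q h1 h2 h3 h4 hmod
  rcases le_total p q with h | h
  · exact eq_of_modEq_le S x y a hper p q h1 h4 h hmod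
  · exact (eq_of_modEq_le S x y a hper q p h3 h2 h hmod.symm).symm

/-- If `S[x..y]` is `α`-periodic and contains a palindrome substring `S[u..v]`
of length at least `α`, then `S[x..y]` contains a palindrome substring of length
at least `(y - x + 1) - α`. -/
theorem long_palindrome_in_periodic {A : Type*} (S : ℕ → A) (n x y a u v : ℕ)
    (ha : 1 ≤ a) (hx : 1 ≤ x) (hyn : y ≤ n)
    (hper : ∀ t, x ≤ t → t + a ≤ y → S t = S (t + a))
    (hxu : x ≤ u) (huv : u ≤ v) (hvy : v ≤ y)
    (hpal : ∀ t, 1 ≤ t → t ≤ v - u + 1 → S (u + t - 1) = S (v + 1 - t))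
    (hlen : a ≤ v - u + 1) :
    ∃ u' v', x ≤ u' ∧ u' ≤ v' ∧ v' ≤ y ∧
      (y - x + 1) - a ≤ v' - u' + 1 ∧
      ∀ t, 1 ≤ t → t ≤ v' - u' + 1 → S (u' + t - 1) = S (v' + 1 - t) := by
  by_cases hsmall : y + 1 ≤ x + a
  · exact ⟨u, v, hxu, huv, hvy, by omega, hpal⟩
  push_neg at hsmall
  set m := u + v with hm
  set r := (m + a * y - (x + y)) % a with hr
  have hay : y ≤ a * y := Nat.le_mul_of_pos_left y (by omega)
  have hrlt : r < a := Nat.mod_lt _ (by omega)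
  refine ⟨x + r, y, by omega, by omega, le_refl _, by omega, ?_⟩
  -- key congruence : (x + r) + y ≡ m [MOD a]
  have hXY : (x + r) + y ≡ m [MOD a] := by
    have h1 : m + a * y - (x + y) ≡ r [MOD a] := (Nat.mod_modEq _ a).symm
    have h2 : (x + y) + (m + a * y - (x + y)) ≡ (x + y) + r [MOD a] :=
      Nat.ModEq.add_left _ h1
    have h3 : (x + y) + (m + a * y - (x + y)) = m + a * y := by omega
    have h4 : m + a * y ≡ m [MOD a] := by
      calc m + a * y ≡ m + 0 [MOD a] :=
        Nat.ModEq.add_left _ ((Nat.modEq_zero_iff_dvd).mpr ⟨y, rfl⟩)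
        _ = m := by omega
    have : (x + y) + r ≡ m [MOD a] := by
      calc (x + y) + r ≡ (x + y) + (m + a * y - (x + y)) [MOD a] := h2.symm
        _ = m + a * y := h3
        _ ≡ m [MOD a] := h4
    calc (x + r) + y = (x + y) + r := by omega
      _ ≡ m [MOD a] := this
  intro t ht1 ht2
  set X := x + r with hXdef
  set p := X + t - 1 with hp
  set p' := y + 1 - t with hp'
  have hXp : X ≤ p := by omega
  have hpY : p ≤ y := by omega
  have hXp' : X ≤ p' := by omega
  have hp'Y : p' ≤ y := by omega
  have hpp' : p + p' = X + y := by omega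
  -- q : representative of p's residue class inside [u, v]
  set q := u + (p + a * y - u) % a with hq
  have huq : u ≤ q := by omega
  have hqv : q ≤ v := by
    have : (p + a * y - u) % a < a := Nat.mod_lt _ (by omega)
    omega
  have hpq : p ≡ q [MOD a] := by
    have h1 : (p + a * y - u) ≡ (p + a * y - u) % a [MOD a] := (Nat.mod_modEq _ a).symm
    have h2 : u + (p + a * y - u) ≡ q [MOD a] := Nat.ModEq.add_left _ h1
    have h3 : u + (p + a * y - u) = p + a * y := by omega
    have h4 : p ≡ p + a * y [MOD a] := by
      calc p = p + 0 := by omega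
        _ ≡ p + a * y [MOD a] := Nat.ModEq.add_left _
          ((Nat.modEq_zero_iff_dvd).mpr ⟨y, rfl⟩).symm
    calc p ≡ p + a * y [MOD a] := h4
      _ = u + (p + a * y - u) := h3.symm
      _ ≡ q [MOD a] := h2
  set q' := u + v - q with hq'
  have hqq' : q + q' = u + v := by omega
  -- q' ≡ p' [MOD a]  by cancellation
  have hq'p' : q' ≡ p' [MOD a] := by
    have h1 : q' + q ≡ p' + q [MOD a] := by
      calc q' + q = m := by omega
        _ ≡ X + y [MOD a] := hXY.symm
        _ = p' + p := by omega
        _ ≡ p' + q [MOD a] := Nat.ModEq.add_left _ hpq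
    exact Nat.ModEq.add_right_cancel' q h1
  -- now chain the equalities
  have e1 : S p = S q := eq_of_modEq' S x y a hper p q (by omega) (by omega)
    (by omega) (by omega) hpq
  have e2 : S q = S q' := by
    have := hpal (q - u + 1) (by omega) (by omega)
    have hA : u + (q - u + 1) - 1 = q := by omega
    have hB : v + 1 - (q - u + 1) = q' := by omega
    rwa [hA, hB] at this
  have e3 : S q' = S p' := eq_of_modEq' S x y a hper q' p' (by omega) (by omega)
    (by omega) (by omega) hq'p'
  show S p = S p'
  rw [e1, e2, e3]
end

section
/- For all natural numbers n ≥ 1, m ≤ n and r ≤ n with r·m ≤ n, the inequality C(n−m, r) / C(n, r) ≤ 1 − (r·m)/(2n) holds (as real numbers), where C(a,b) denotes the binomial coefficient. -/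
lemma descFactorial_mul_pow_le (n m : ℕ) : ∀ r : ℕ,
    (n - m).descFactorial r * n ^ r ≤ n.descFactorial r * (n - m) ^ r := by
  intro r
  induction r with
  | zero => simp
  | succ r ih =>
    rw [Nat.descFactorial_succ, Nat.descFactorial_succ, pow_succ, pow_succ]
    have key : (n - m - r) * n ≤ (n - r) * (n - m) := by
      have hmr : r * (n - m) ≤ r * n := Nat.mul_le_mul_left r (Nat.sub_le n m)
      calc (n - m - r) * n = (n - m) * n - r * n := Nat.sub_mul _ _ _
        _ ≤ (n - m) * n - r * (n - m) := Nat.sub_le_sub_left hmr _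
        _ = (n - r) * (n - m) := by rw [Nat.sub_mul n r (n - m), Nat.mul_comm n (n - m)]
    calc (n - m - r) * (n - m).descFactorial r * (n ^ r * n)
        = ((n - m).descFactorial r * n ^ r) * ((n - m - r) * n) := by ring
      _ ≤ (n.descFactorial r * (n - m) ^ r) * ((n - r) * (n - m)) :=
          Nat.mul_le_mul ih key
      _ = (n - r) * n.descFactorial r * ((n - m) ^ r * (n - m)) := by ring

lemma one_sub_pow_le (x : ℝ) (hx : 0 ≤ x) : ∀ r : ℕ, (r : ℝ) * x ≤ 1 →
    (1 - x) ^ r ≤ 1 - (r : ℝ) * x / 2 := by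
  intro r
  induction r with
  | zero => simp
  | succ r ih =>
    intro h
    have hr0 : (0 : ℝ) ≤ (r : ℝ) := Nat.cast_nonneg r
    push_cast at h
    have hx1 : x ≤ 1 := by nlinarith
    have hrx : (r : ℝ) * x ≤ 1 := by nlinarith
    have ih' := ih hrx
    have h1x : (0 : ℝ) ≤ 1 - x := by linarith
    calc (1 - x) ^ (r + 1) = (1 - x) ^ r * (1 - x) := pow_succ _ _
      _ ≤ (1 - (r : ℝ) * x / 2) * (1 - x) := mul_le_mul_of_nonneg_right ih' h1x
      _ ≤ 1 - ((r : ℕ) + 1 : ℝ) * x / 2 := by nlinarith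
      _ = 1 - ((r + 1 : ℕ) : ℝ) * x / 2 := by push_cast; ring

/-- For `n ≥ 1`, `m ≤ n`, `r ≤ n` with `r·m ≤ n`, the fraction of `r`-subsets of
an `n`-set avoiding a fixed `m`-set satisfies
`C(n-m, r) / C(n, r) ≤ 1 - (r·m)/(2n)`. -/
theorem choose_avoid_ratio_le_linear (n m r : ℕ) (hn : 1 ≤ n) (hm : m ≤ n)
    (hr : r ≤ n) (hrm : r * m ≤ n) :
    ((n - m).choose r : ℝ) / (n.choose r : ℝ) ≤
      1 - ((r : ℝ) * (m : ℝ)) / (2 * (n : ℝ)) := by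
  have hnpos : (0 : ℝ) < n := by exact_mod_cast hn
  have hchoosepos : (0 : ℝ) < n.choose r := by
    exact_mod_cast Nat.choose_pos hr
  -- Step 1: ratio ≤ ((n-m)/n)^r
  have hnat : (n - m).choose r * n ^ r ≤ n.choose r * (n - m) ^ r := by
    have h1 := descFactorial_mul_pow_le n m r
    rw [Nat.descFactorial_eq_factorial_mul_choose, Nat.descFactorial_eq_factorial_mul_choose] at h1
    have hfac : 0 < r.factorial := Nat.factorial_pos r
    calc (n - m).choose r * n ^ r
        = (r.factorial * ((n - m).choose r * n ^ r)) / r.factorial := by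
          rw [Nat.mul_div_cancel_left _ hfac]
      _ ≤ (r.factorial * (n.choose r * (n - m) ^ r)) / r.factorial := by
          apply Nat.div_le_div_right
          calc r.factorial * ((n - m).choose r * n ^ r)
              = r.factorial * (n - m).choose r * n ^ r := by ring
            _ ≤ r.factorial * n.choose r * (n - m) ^ r := h1
            _ = r.factorial * (n.choose r * (n - m) ^ r) := by ring
      _ = n.choose r * (n - m) ^ r := Nat.mul_div_cancel_left _ hfac
  have hstep1 : ((n - m).choose r : ℝ) / (n.choose r : ℝ) ≤ (1 - (m : ℝ) / n) ^ r := by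
    rw [div_le_iff₀ hchoosepos]
    have hcast : ((1 : ℝ) - (m : ℝ) / n) = ((n - m : ℕ) : ℝ) / n := by
      rw [Nat.cast_sub hm]; field_simp
    rw [hcast, div_pow, div_mul_eq_mul_div, le_div_iff₀ (by positivity)]
    calc ((n - m).choose r : ℝ) * (n : ℝ) ^ r
        = (((n - m).choose r * n ^ r : ℕ) : ℝ) := by push_cast; ring
      _ ≤ ((n.choose r * (n - m) ^ r : ℕ) : ℝ) := by exact_mod_cast hnat
      _ = ((n - m : ℕ) : ℝ) ^ r * (n.choose r : ℝ) := by push_cast; ring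
  -- Step 2: (1 - m/n)^r ≤ 1 - r*m/(2n)
  have hx : (0 : ℝ) ≤ (m : ℝ) / n := by positivity
  have hrx : (r : ℝ) * ((m : ℝ) / n) ≤ 1 := by
    rw [mul_div_assoc', div_le_one hnpos]
    exact_mod_cast hrm
  have hstep2 := one_sub_pow_le ((m : ℝ) / n) hx r hrx
  calc ((n - m).choose r : ℝ) / (n.choose r : ℝ) ≤ (1 - (m : ℝ) / n) ^ r := hstep1
    _ ≤ 1 - (r : ℝ) * ((m : ℝ) / n) / 2 := hstep2
    _ = 1 - ((r : ℝ) * (m : ℝ)) / (2 * (n : ℝ)) := by field_simp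
end

section
/- Let N ≥ 1 and 1 ≤ r ≤ N be natural numbers, and let (i_1, j_1), …, (i_m, j_m) be m ≥ 1 pairs of elements of {1, …, N} such that i_1, …, i_m are pairwise distinct and r·m ≤ N. Then the number of pairs (R1, R2), where R1 and R2 are r-element subsets of {1, …, N}, such that i_k ∈ R1 and j_k ∈ R2 for some k, is at least (m·r²/(2N²)) · C(N, r)². -/
attribute [local instance] Classical.propDecidable

open Finset

lemma count_avoid {s F : Finset ℕ} {a : ℕ} {r : ℕ} (hr : 1 ≤ r) (ha : a ∈ s) (haF : a ∉ F) :
    ((s \ insert a F).card).choose (r - 1) ≤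
      ((s.powersetCard r).filter (fun R => a ∈ R ∧ ∀ b ∈ F, b ∉ R)).card := by
  rw [← Finset.card_powersetCard]
  apply Finset.card_le_card_of_injOn (fun Q => insert a Q)
  · intro Q hQ
    simp only [Finset.mem_coe, Finset.mem_powersetCard] at hQ
    obtain ⟨hQs, hQc⟩ := hQ
    have haQ : a ∉ Q := fun h => (Finset.mem_sdiff.1 (hQs h)).2 (Finset.mem_insert_self _ _)
    simp only [Finset.mem_coe, Finset.mem_filter, Finset.mem_powersetCard]
    refine ⟨⟨?_, ?_⟩, Finset.mem_insert_self _ _, ?_⟩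
    · intro x hx
      rcases Finset.mem_insert.1 hx with h | h
      · exact h ▸ ha
      · exact (Finset.mem_sdiff.1 (hQs h)).1
    · rw [Finset.card_insert_of_notMem haQ, hQc]; omega
    · intro b hbF hb
      rcases Finset.mem_insert.1 hb with h | h
      · exact haF (h ▸ hbF)
      · exact (Finset.mem_sdiff.1 (hQs h)).2 (Finset.mem_insert_of_mem hbF)
  · intro Q1 h1 Q2 h2 heq
    simp only [Finset.mem_coe, Finset.mem_powersetCard] at h1 h2
    have haQ1 : a ∉ Q1 := fun h => (Finset.mem_sdiff.1 (h1.1 h)).2 (Finset.mem_insert_self _ _)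
    have haQ2 : a ∉ Q2 := fun h => (Finset.mem_sdiff.1 (h2.1 h)).2 (Finset.mem_insert_self _ _)
    have := congrArg (Finset.erase · a) heq
    simpa [Finset.erase_insert, haQ1, haQ2] using this

-- hockey stick

lemma hockey (N r m : ℕ) (hr : 1 ≤ r) (hm : m ≤ N) :
    ∑ k ∈ Finset.range m, (N - 1 - k).choose (r - 1) + (N - m).choose r = N.choose r := by
  induction m with
  | zero => simp
  | succ m ih =>
    rw [Finset.sum_range_succ]
    have h1 : m ≤ N := by omega
    have key : (N - 1 - m).choose (r - 1) + (N - (m + 1)).choose r = (N - m).choose r := by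
      have hNm : N - m = (N - m - 1) + 1 := by omega
      have hrr : r = (r - 1) + 1 := by omega
      rw [hNm, hrr, Nat.choose_succ_succ]
      congr 2 <;> omega
    rw [← ih h1]; omega

lemma choose_step (N r a : ℕ) (ha : 1 ≤ a) (haN : a ≤ N) :
    (a - 1).choose r * N ≤ a.choose r * (N - r) := by
  have hid : (a - 1).choose r * a = a.choose r * (a - r) := by
    have := Nat.choose_mul_succ_eq (a - 1) r
    have h : a - 1 + 1 = a := by omega
    rwa [h] at this
  have hmul : (a - r) * N ≤ (N - r) * a := by
    rcases le_or_gt a r with h | h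
    · simp [Nat.sub_eq_zero_of_le h]
    · have h1 : (a - r) * N = a * N - r * N := by rw [Nat.sub_mul]
      have h2 : (N - r) * a = N * a - r * a := by rw [Nat.sub_mul]
      have h3 : r * a ≤ r * N := Nat.mul_le_mul_left r haN
      rw [h1, h2]
      calc a * N - r * N ≤ a * N - r * a := Nat.sub_le_sub_left h3 _
        _ = N * a - r * a := by ring_nf
  have : (a - 1).choose r * N * a ≤ a.choose r * (N - r) * a := by
    calc (a - 1).choose r * N * a = ((a - 1).choose r * a) * N := by ring
      _ = a.choose r * (a - r) * N := by rw [hid]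
      _ = a.choose r * ((a - r) * N) := by ring
      _ ≤ a.choose r * ((N - r) * a) := Nat.mul_le_mul_left _ hmul
      _ = a.choose r * (N - r) * a := by ring
  exact Nat.le_of_mul_le_mul_right this (by omega)

lemma choose_ratio (N r m : ℕ) (hm : m ≤ N) :
    (N - m).choose r * N ^ m ≤ N.choose r * (N - r) ^ m := by
  induction m with
  | zero => simp
  | succ m ih =>
    have h1 : m ≤ N := by omega
    have step := choose_step N r (N - m) (by omega) (by omega)
    have hsub : N - m - 1 = N - (m + 1) := by omega
    calc (N - (m + 1)).choose r * N ^ (m + 1)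
        = ((N - m - 1).choose r * N) * N ^ m := by rw [hsub]; ring
      _ ≤ ((N - m).choose r * (N - r)) * N ^ m := Nat.mul_le_mul_right _ step
      _ = ((N - m).choose r * N ^ m) * (N - r) := by ring
      _ ≤ (N.choose r * (N - r) ^ m) * (N - r) := Nat.mul_le_mul_right _ (ih h1)
      _ = N.choose r * (N - r) ^ (m + 1) := by ring

lemma pow_bound (m : ℕ) (t : ℝ) (ht : 0 ≤ t) (hmt : (m : ℝ) * t ≤ 1) :
    (1 - t) ^ m ≤ 1 - (m : ℝ) * t / 2 := by
  rcases Nat.eq_zero_or_pos m with hm | hm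
  · subst hm; simp
  have hm1 : (1 : ℝ) ≤ (m : ℝ) := by exact_mod_cast hm
  have ht1 : t ≤ 1 := by nlinarith
  have hA : (1 - t) ^ m * (1 + t) ^ m ≤ 1 := by
    rw [← mul_pow]
    have he : (1 - t) * (1 + t) = 1 - t ^ 2 := by ring
    rw [he]
    exact pow_le_one₀ (by nlinarith) (by nlinarith)
  have hB : 1 + (m : ℝ) * t ≤ (1 + t) ^ m := one_add_mul_le_pow (by linarith) m
  have hpos : (0 : ℝ) < 1 + (m : ℝ) * t := by positivity
  have hnn : (0 : ℝ) ≤ (1 - t) ^ m := pow_nonneg (by linarith) m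
  have h1 : (1 - t) ^ m * (1 + (m : ℝ) * t) ≤ 1 :=
    le_trans (mul_le_mul_of_nonneg_left hB hnn) hA
  have hx : (m : ℝ) * t ≤ 1 := hmt
  nlinarith [mul_nonneg hnn (mul_nonneg (Nat.cast_nonneg m) ht)]

/-- Let `1 ≤ r ≤ N` and let `(i k, j k)`, `k : Fin m` (`m ≥ 1`), be pairs of
elements of `{1, …, N}` with the `i k` pairwise distinct and `r·m ≤ N`. Then the
number of pairs `(R1, R2)` of `r`-element subsets of `{1, …, N}` with
`i k ∈ R1` and `j k ∈ R2` for some `k` is at least `(m·r²/(2N²))·C(N, r)²`. -/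
theorem marked_pairs_count_ge_of_many {N r m : ℕ} (hN : 1 ≤ N) (hr1 : 1 ≤ r)
    (hrN : r ≤ N) (hm : 1 ≤ m) (i j : Fin m → ℕ)
    (hiN : ∀ k, i k ∈ Finset.Icc 1 N) (hjN : ∀ k, j k ∈ Finset.Icc 1 N)
    (hinj : Function.Injective i) (hrm : r * m ≤ N) :
    ((m : ℝ) * (r : ℝ) ^ 2 / (2 * (N : ℝ) ^ 2)) * ((N.choose r : ℝ)) ^ 2 ≤
      ((((Finset.Icc 1 N).powersetCard r ×ˢ (Finset.Icc 1 N).powersetCard r).filter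
        (fun RR => ∃ k, i k ∈ RR.1 ∧ j k ∈ RR.2)).card : ℝ) := by
  have hmN : m ≤ N := le_trans (Nat.le_mul_of_pos_left m hr1) hrm
  set S : Finset ℕ := Finset.Icc 1 N with hS
  have hScard : S.card = N := by rw [hS, Nat.card_Icc]; omega
  set P := S.powersetCard r with hP
  set T := (P ×ˢ P).filter (fun RR => ∃ k, i k ∈ RR.1 ∧ j k ∈ RR.2) with hT
  set F : Fin m → Finset ℕ := fun k => (Finset.univ.filter (fun l => l < k)).image i with hF
  set B : Fin m → Finset (Finset ℕ × Finset ℕ) := fun k =>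
    (P.filter (fun R => i k ∈ R ∧ ∀ b ∈ F k, b ∉ R)) ×ˢ
    (P.filter (fun R => j k ∈ R ∧ ∀ b ∈ (∅ : Finset ℕ), b ∉ R)) with hB
  -- membership in B k gives data
  have hBmem : ∀ k RR, RR ∈ B k ↔
      ((RR.1 ∈ P ∧ (i k ∈ RR.1 ∧ ∀ b ∈ F k, b ∉ RR.1)) ∧
       (RR.2 ∈ P ∧ (j k ∈ RR.2 ∧ ∀ b ∈ (∅ : Finset ℕ), b ∉ RR.2))) := by
    intro k RR
    simp [hB, Finset.mem_product, Finset.mem_filter]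
  have hsub : ∀ k, B k ⊆ T := by
    intro k RR hRR
    rw [hBmem] at hRR
    exact Finset.mem_filter.2 ⟨Finset.mem_product.2 ⟨hRR.1.1, hRR.2.1⟩,
      ⟨k, hRR.1.2.1, hRR.2.2.1⟩⟩
  have hik_notF : ∀ k, i k ∉ F k := by
    intro k hk
    rw [hF] at hk
    simp only [Finset.mem_image, Finset.mem_filter, Finset.mem_univ, true_and] at hk
    obtain ⟨l, hl, hli⟩ := hk
    exact absurd (hinj hli) (ne_of_lt hl)
  have hdisj : ∀ k ∈ (Finset.univ : Finset (Fin m)), ∀ k' ∈ Finset.univ, k ≠ k' →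
      Disjoint (B k) (B k') := by
    have key : ∀ k k' : Fin m, k < k' → Disjoint (B k) (B k') := by
      intro k k' hkk'
      rw [Finset.disjoint_left]
      intro RR h1 h2
      rw [hBmem] at h1 h2
      apply h2.1.2.2 (i k) _ h1.1.2.1
      rw [hF]
      simp only [Finset.mem_image, Finset.mem_filter, Finset.mem_univ, true_and]
      exact ⟨k, hkk', rfl⟩
    intro k _ k' _ hne
    rcases lt_or_gt_of_ne hne with h | h
    · exact key _ _ h
    · exact (key _ _ h).symm
  -- card of F k
  have hFcard : ∀ k : Fin m, (F k).card = (k : ℕ) := by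
    intro k
    rw [hF]
    rw [Finset.card_image_of_injective _ hinj]
    have : (Finset.univ.filter (fun l => l < k)) = Finset.Iio k := by
      ext l; simp
    rw [this, Fin.card_Iio]
  have hFS : ∀ k : Fin m, F k ⊆ S := by
    intro k
    rw [hF]
    intro x hx
    simp only [Finset.mem_image] at hx
    obtain ⟨l, _, rfl⟩ := hx
    exact hiN l
  -- card lower bound for B k
  have hBcard : ∀ k : Fin m, (N - 1 - (k : ℕ)).choose (r - 1) * (N - 1).choose (r - 1)
      ≤ (B k).card := by
    intro k
    rw [hB]
    simp only
    rw [Finset.card_product]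
    apply Nat.mul_le_mul
    · have h := count_avoid (s := S) (F := F k) (a := i k) hr1 (hiN k) (hik_notF k)
      have hc : (S \ insert (i k) (F k)).card = N - 1 - (k : ℕ) := by
        have hins : insert (i k) (F k) ⊆ S := Finset.insert_subset (hiN k) (hFS k)
        rw [Finset.card_sdiff_of_subset hins, Finset.card_insert_of_notMem (hik_notF k),
          hFcard k, hScard]
        omega
      rwa [hc] at h
    · have h := count_avoid (s := S) (F := (∅ : Finset ℕ)) (a := j k) hr1 (hjN k)
        (Finset.notMem_empty _)
      have hc : (S \ insert (j k) ∅).card = N - 1 := by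
        have : insert (j k) (∅ : Finset ℕ) = {j k} := by simp
        rw [this, Finset.card_sdiff_of_subset
          (Finset.singleton_subset_iff.2 (hjN k)), Finset.card_singleton, hScard]
      rwa [hc] at h
  -- sum over k
  have hsum : (∑ k ∈ Finset.range m, (N - 1 - k).choose (r - 1)) * (N - 1).choose (r - 1)
      ≤ T.card := by
    calc (∑ k ∈ Finset.range m, (N - 1 - k).choose (r - 1)) * (N - 1).choose (r - 1)
        = ∑ k ∈ Finset.range m, (N - 1 - k).choose (r - 1) * (N - 1).choose (r - 1) := by
          rw [Finset.sum_mul]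
      _ = ∑ k : Fin m, (N - 1 - (k : ℕ)).choose (r - 1) * (N - 1).choose (r - 1) := by
          rw [← Fin.sum_univ_eq_sum_range]
      _ ≤ ∑ k : Fin m, (B k).card := Finset.sum_le_sum (fun k _ => hBcard k)
      _ = (Finset.univ.biUnion B).card := (Finset.card_biUnion hdisj).symm
      _ ≤ T.card := Finset.card_le_card (Finset.biUnion_subset.2 (fun k _ => hsub k))
  -- arithmetic
  have hhockey : (∑ k ∈ Finset.range m, (N - 1 - k).choose (r - 1)) + (N - m).choose r
      = N.choose r := hockey N r m hr1 hmN
  have hratioN : (N - m).choose r * N ^ m ≤ N.choose r * (N - r) ^ m := choose_ratio N r m hmN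
  have hchoose1 : N * (N - 1).choose (r - 1) = N.choose r * r := by
    have h := Nat.add_one_mul_choose_eq (N - 1) (r - 1)
    have h1 : N - 1 + 1 = N := by omega
    have h2 : r - 1 + 1 = r := by omega
    rwa [h1, h2] at h
  have hNpos : (0 : ℝ) < (N : ℝ) := Nat.cast_pos.2 (by omega)
  have hcpos : (0 : ℝ) < (N.choose r : ℝ) := Nat.cast_pos.2 (Nat.choose_pos hrN)
  have hcast : ((N - m).choose r : ℝ) * (N : ℝ) ^ m ≤ (N.choose r : ℝ) * ((N : ℝ) - r) ^ m := by
    calc ((N - m).choose r : ℝ) * (N : ℝ) ^ m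
        = (((N - m).choose r * N ^ m : ℕ) : ℝ) := by push_cast; ring
      _ ≤ ((N.choose r * (N - r) ^ m : ℕ) : ℝ) := by exact_mod_cast hratioN
      _ = (N.choose r : ℝ) * ((N : ℝ) - r) ^ m := by push_cast [Nat.cast_sub hrN]; ring
  have hc'le : ((N - m).choose r : ℝ) ≤ (N.choose r : ℝ) * (1 - (r : ℝ) / N) ^ m := by
    have hpow : (0 : ℝ) < (N : ℝ) ^ m := pow_pos hNpos m
    have he : (1 - (r : ℝ) / N) = ((N : ℝ) - r) / N := by field_simp
    rw [he, div_pow, mul_div_assoc', le_div_iff₀ hpow]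
    exact hcast
  have hmrN : (m : ℝ) * (r : ℝ) ≤ (N : ℝ) := by
    have : m * r ≤ N := by rw [mul_comm]; exact hrm
    exact_mod_cast this
  have hpb := pow_bound m ((r : ℝ) / N) (by positivity)
    (by rw [mul_div_assoc', div_le_one hNpos]; exact hmrN)
  have hc'le2 : ((N - m).choose r : ℝ) ≤
      (N.choose r : ℝ) * (1 - (m : ℝ) * ((r : ℝ) / N) / 2) :=
    le_trans hc'le (mul_le_mul_of_nonneg_left hpb (Nat.cast_nonneg _))
  have hgap : (m : ℝ) * (r : ℝ) / (2 * (N : ℝ)) * (N.choose r : ℝ) ≤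
      (N.choose r : ℝ) - ((N - m).choose r : ℝ) := by
    have he : (N.choose r : ℝ) * (1 - (m : ℝ) * ((r : ℝ) / N) / 2) =
        (N.choose r : ℝ) - (m : ℝ) * (r : ℝ) / (2 * (N : ℝ)) * (N.choose r : ℝ) := by
      field_simp
    rw [he] at hc'le2; linarith
  have hs0eq : ((∑ k ∈ Finset.range m, (N - 1 - k).choose (r - 1) : ℕ) : ℝ)
      = (N.choose r : ℝ) - ((N - m).choose r : ℝ) := by
    rw [eq_sub_iff_add_eq]
    exact_mod_cast hhockey
  have hTge : ((∑ k ∈ Finset.range m, (N - 1 - k).choose (r - 1) : ℕ) : ℝ) *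
      ((N - 1).choose (r - 1) : ℝ) ≤ (T.card : ℝ) := by exact_mod_cast hsum
  have hc1 : ((N : ℝ)) * ((N - 1).choose (r - 1) : ℝ) = (N.choose r : ℝ) * r := by
    exact_mod_cast hchoose1
  have hc1eq : ((N - 1).choose (r - 1) : ℝ) = (r : ℝ) * (N.choose r : ℝ) / (N : ℝ) := by
    rw [eq_div_iff (ne_of_gt hNpos)]; linarith [hc1]
  calc (m : ℝ) * (r : ℝ) ^ 2 / (2 * (N : ℝ) ^ 2) * ((N.choose r : ℝ)) ^ 2
      = ((m : ℝ) * (r : ℝ) / (2 * (N : ℝ)) * (N.choose r : ℝ)) *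
        ((r : ℝ) * (N.choose r : ℝ) / (N : ℝ)) := by field_simp
    _ = ((m : ℝ) * (r : ℝ) / (2 * (N : ℝ)) * (N.choose r : ℝ)) *
        ((N - 1).choose (r - 1) : ℝ) := by rw [hc1eq]
    _ ≤ ((N.choose r : ℝ) - ((N - m).choose r : ℝ)) * ((N - 1).choose (r - 1) : ℝ) :=
        mul_le_mul_of_nonneg_right hgap (Nat.cast_nonneg _)
    _ = ((∑ k ∈ Finset.range m, (N - 1 - k).choose (r - 1) : ℕ) : ℝ) *
        ((N - 1).choose (r - 1) : ℝ) := by rw [hs0eq]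
    _ ≤ (T.card : ℝ) := hTge
end

section
/- For all real numbers q, η, p with 0 < q ≤ 1, 0 < η ≤ 1 and 0 ≤ p ≤ (1−η)·q, the strict inequality p + (π·η/10)·√(p(1−p))·√q + (π²·η²/400)·q < (1 − η/2)·q holds. -/
open Real

/-- For `0 < q ≤ 1`, `0 < η ≤ 1` and `0 ≤ p ≤ (1-η)q`,
`p + (πη/10)√(p(1-p))√q + (π²η²/400)q < (1 - η/2)q`. -/
theorem amplitude_estimate_small_case (q η p : ℝ) (hq0 : 0 < q) (hq1 : q ≤ 1)
    (hη0 : 0 < η) (hη1 : η ≤ 1) (hp0 : 0 ≤ p) (hp : p ≤ (1 - η) * q) :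
    p + (π * η / 10) * Real.sqrt (p * (1 - p)) * Real.sqrt q +
        (π ^ 2 * η ^ 2 / 400) * q < (1 - η / 2) * q := by
  have hpq : p ≤ q := le_trans hp (by nlinarith)
  have h1 : p * (1 - p) ≤ q := by nlinarith
  have h2 : Real.sqrt (p*(1-p)) ≤ Real.sqrt q := Real.sqrt_le_sqrt h1
  have hsq : Real.sqrt q * Real.sqrt q = q := Real.mul_self_sqrt hq0.le
  have h3 : Real.sqrt (p*(1-p)) * Real.sqrt q ≤ q := by
    nlinarith [Real.sqrt_nonneg q, Real.sqrt_nonneg (p*(1-p))]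
  have hπl : (3.1415 : ℝ) < π := by
    have := Real.pi_gt_d6; linarith
  have hπu : π < 3.15 := Real.pi_lt_d2
  have hc : 0 ≤ π * η / 10 := by positivity
  have key : π * η / 10 * (Real.sqrt (p*(1-p)) * Real.sqrt q) ≤ π * η / 10 * q :=
    mul_le_mul_of_nonneg_left h3 hc
  have hηq : 0 < η * q := mul_pos hη0 hq0
  have h4 : π / 10 + π ^ 2 * η / 400 < 1 / 2 := by nlinarith [Real.pi_pos]
  have h5 : (π / 10 + π ^ 2 * η / 400) * (η * q) < 1 / 2 * (η * q) := by
    apply mul_lt_mul_of_pos_right h4 hηq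
  nlinarith [key]
end

section
/- For all real numbers q, η, p with 0 < q ≤ 1, 0 < η ≤ 1 and q ≤ p ≤ 1, the strict inequality p − (π·η/10)·√(p(1−p))·√q − (π²·η²/400)·q > (1 − η/2)·q holds. -/
open Real

/-- For `0 < q ≤ 1`, `0 < η ≤ 1` and `q ≤ p ≤ 1`,
`p - (πη/10)√(p(1-p))√q - (π²η²/400)q > (1 - η/2)q`. -/
theorem amplitude_estimate_large_case (q η p : ℝ) (hq0 : 0 < q) (hq1 : q ≤ 1)
    (hη0 : 0 < η) (hη1 : η ≤ 1) (hqp : q ≤ p) (hp1 : p ≤ 1) :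
    p - (π * η / 10) * Real.sqrt (p * (1 - p)) * Real.sqrt q -
        (π ^ 2 * η ^ 2 / 400) * q > (1 - η / 2) * q := by
  have hp0 : (0:ℝ) ≤ p := le_trans hq0.le hqp
  have hπ1 := Real.pi_gt_d6
  have hπ2 := Real.pi_lt_d2
  have hsp : Real.sqrt (p * (1 - p)) ≤ Real.sqrt p :=
    Real.sqrt_le_sqrt (by nlinarith)
  have hp2 : Real.sqrt p ^ 2 = p := Real.sq_sqrt hp0
  have hq2 : Real.sqrt q ^ 2 = q := Real.sq_sqrt hq0.le
  have htq : (0:ℝ) ≤ Real.sqrt q := Real.sqrt_nonneg q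
  have h1 : Real.sqrt p * Real.sqrt q ≤ (p + q) / 2 := by
    nlinarith [sq_nonneg (Real.sqrt p - Real.sqrt q)]
  have hst : Real.sqrt (p * (1 - p)) * Real.sqrt q ≤ (p + q) / 2 :=
    le_trans (mul_le_mul_of_nonneg_right hsp htq) h1
  have key : (π * η / 10) * (Real.sqrt (p * (1 - p)) * Real.sqrt q)
      ≤ (π * η / 10) * ((p + q) / 2) :=
    mul_le_mul_of_nonneg_left hst (by positivity)
  have hη2 : η ^ 2 ≤ η := by nlinarith
  have hπη : π * η ≤ 3.15 := by nlinarith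
  have ha : π * η * (p - q) ≤ 3.15 * (p - q) :=
    mul_le_mul_of_nonneg_right hπη (by linarith)
  have hb : π * η * q ≤ 3.15 * (η * q) := by
    nlinarith [mul_le_mul_of_nonneg_right hπ2.le (mul_nonneg hη0.le hq0.le)]
  have hc1 : π ^ 2 ≤ 9.9225 := by nlinarith [Real.pi_pos]
  have hc : π ^ 2 * η ^ 2 * q ≤ 9.9225 * (η * q) := by
    nlinarith [mul_le_mul_of_nonneg_right hc1 (mul_nonneg (sq_nonneg η) hq0.le),
      mul_le_mul_of_nonneg_right hη2 hq0.le]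
  have hd : (0:ℝ) < η * q := mul_pos hη0 hq0
  nlinarith [key, ha, hb, hc, hd]
end
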